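/- Let f : ℝ^d → ℝ be C² with L_H-Lipschitz Hessian on ℝ^d, let x, d ∈ ℝ^d, let H be symmetric with ‖∇²f(x) - H‖ ≤ δ_H and dᵀH d ≤ -‖d‖³, and let g ∈ ℝ^d with ‖∇f(x) - g‖ ≤ δ_g and dᵀg ≤ 0. Then for any α ∈ [0,1]: f(x + α·d) - f(x) ≤ α·δ_g·‖d‖ - (α²/2)·‖d‖³ + (α²/2)·δ_H·‖d‖² + (L_H/6)·α³·‖d‖³. -/

import Mathlib

open RealInnerProductSpace

lemma taylor2_upper {E : Type*} [NormedAddCommGroup E] [InnerProductSpace ℝ E]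
    (f : E → ℝ) (hf : ContDiff ℝ 2 f) (L : ℝ) (hL : 0 ≤ L)
    (hlip : ∀ u v : E, ‖fderiv ℝ (fderiv ℝ f) u - fderiv ℝ (fderiv ℝ f) v‖ ≤ L * ‖u - v‖)
    (x p : E) :
    f (x + p) ≤ f x + fderiv ℝ f x p + (1/2) * fderiv ℝ (fderiv ℝ f) x p p
      + L / 6 * ‖p‖ ^ 3 := by
  have hdf : Differentiable ℝ f := hf.differentiable (by norm_num)
  have hdf2 : Differentiable ℝ (fderiv ℝ f) :=
    (hf.fderiv_right (m := 1) (by norm_num)).differentiable one_ne_zero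
  set B : ℝ := fderiv ℝ (fderiv ℝ f) x p p with hB
  set M : ℝ := L * ‖p‖ ^ 3 with hM
  -- line
  have hl : ∀ t : ℝ, HasDerivAt (fun t : ℝ => x + t • p) p t := by
    intro t
    simpa using ((hasDerivAt_id t).smul_const p).const_add x
  -- first derivative of φ
  have hφ : ∀ t : ℝ, HasDerivAt (fun t => f (x + t • p)) (fderiv ℝ f (x + t • p) p) t := by
    intro t
    exact (hdf (x + t • p)).hasFDerivAt.comp_hasDerivAt t (hl t)
  -- derivative of g1
  have hg1 : ∀ t : ℝ, HasDerivAt (fun t => fderiv ℝ f (x + t • p) p)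
      (fderiv ℝ (fderiv ℝ f) (x + t • p) p p) t := by
    intro t
    have h1 : HasFDerivAt (fun y => fderiv ℝ f y p)
        ((ContinuousLinearMap.apply ℝ ℝ p).comp (fderiv ℝ (fderiv ℝ f) (x + t • p)))
        (x + t • p) :=
      (ContinuousLinearMap.apply ℝ ℝ p).hasFDerivAt.comp _ (hdf2 (x + t • p)).hasFDerivAt
    exact h1.comp_hasDerivAt t (hl t)
  -- lipschitz bound on second directional derivative
  have hg2 : ∀ t : ℝ, 0 ≤ t → fderiv ℝ (fderiv ℝ f) (x + t • p) p p - B ≤ M * t := by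
    intro t ht
    have h1 : fderiv ℝ (fderiv ℝ f) (x + t • p) p p - B
        = ((fderiv ℝ (fderiv ℝ f) (x + t • p) - fderiv ℝ (fderiv ℝ f) x) p) p := by
      simp [hB]
    rw [h1]
    calc ((fderiv ℝ (fderiv ℝ f) (x + t • p) - fderiv ℝ (fderiv ℝ f) x) p) p
        ≤ ‖((fderiv ℝ (fderiv ℝ f) (x + t • p) - fderiv ℝ (fderiv ℝ f) x) p) p‖ :=
          le_abs_self _
      _ ≤ ‖(fderiv ℝ (fderiv ℝ f) (x + t • p) - fderiv ℝ (fderiv ℝ f) x) p‖ * ‖p‖ :=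
          ContinuousLinearMap.le_opNorm _ _
      _ ≤ ‖fderiv ℝ (fderiv ℝ f) (x + t • p) - fderiv ℝ (fderiv ℝ f) x‖ * ‖p‖ * ‖p‖ := by
          gcongr; exact ContinuousLinearMap.le_opNorm _ _
      _ ≤ (L * ‖x + t • p - x‖) * ‖p‖ * ‖p‖ := by
          gcongr; exact hlip _ _
      _ = M * t := by
          simp [hM, norm_smul, abs_of_nonneg ht]
          ring
  -- ψ1
  set ψ1 : ℝ → ℝ := fun t => fderiv ℝ f (x + t • p) p - fderiv ℝ f x p - t * B - M * t ^ 2 / 2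
    with hψ1
  have hψ1' : ∀ t : ℝ, HasDerivAt ψ1
      (fderiv ℝ (fderiv ℝ f) (x + t • p) p p - B - M * t) t := by
    intro t
    have := (((hg1 t).sub_const (fderiv ℝ f x p)).sub
      ((hasDerivAt_id t).const_mul B)).sub
      (((hasDerivAt_pow 2 t).const_mul M).div_const 2)
    convert this using 1
    · rfl
    · rfl
    · funext s; simp only [hψ1, id_eq, Pi.sub_apply]; push_cast; ring
    · push_cast; ring
  have hψ1nonpos : ∀ t ∈ Set.Icc (0:ℝ) 1, ψ1 t ≤ 0 := by
    intro t ht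
    have hanti : AntitoneOn ψ1 (Set.Icc (0:ℝ) 1) := by
      apply antitoneOn_of_deriv_nonpos (convex_Icc 0 1)
      · exact fun s _ => ((hψ1' s).continuousAt).continuousWithinAt
      · exact fun s _ => (hψ1' s).differentiableAt.differentiableWithinAt
      · intro s hs
        rw [interior_Icc] at hs
        rw [(hψ1' s).deriv]
        have := hg2 s (le_of_lt hs.1)
        linarith
    have h0 : ψ1 0 = 0 := by simp [hψ1]
    have := hanti (Set.left_mem_Icc.mpr zero_le_one) ht ht.1
    linarith
  -- ψ
  set ψ : ℝ → ℝ := fun t => f (x + t • p) - f x - t * fderiv ℝ f x p - t ^ 2 / 2 * B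
    - M * t ^ 3 / 6 with hψ
  have hψ' : ∀ t : ℝ, HasDerivAt ψ (ψ1 t) t := by
    intro t
    have := ((((hφ t).sub_const (f x)).sub
      ((hasDerivAt_id t).const_mul (fderiv ℝ f x p))).sub
      (((hasDerivAt_pow 2 t).div_const 2).mul_const B)).sub
      (((hasDerivAt_pow 3 t).const_mul M).div_const 6)
    convert this using 1
    · rfl
    · rfl
    · funext s; simp only [hψ, id_eq, Pi.sub_apply]; push_cast; ring
    · simp only [hψ1]; push_cast; ring
  have hψanti : AntitoneOn ψ (Set.Icc (0:ℝ) 1) := by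
    apply antitoneOn_of_deriv_nonpos (convex_Icc 0 1)
    · exact fun s _ => ((hψ' s).continuousAt).continuousWithinAt
    · exact fun s _ => (hψ' s).differentiableAt.differentiableWithinAt
    · intro s hs
      rw [interior_Icc] at hs
      rw [(hψ' s).deriv]
      exact hψ1nonpos s ⟨le_of_lt hs.1, le_of_lt hs.2⟩
  have h0 : ψ 0 = 0 := by simp [hψ]
  have h1 := hψanti (Set.left_mem_Icc.mpr zero_le_one)
    (Set.right_mem_Icc.mpr zero_le_one) zero_le_one
  rw [h0] at h1
  simp only [hψ, one_smul, one_pow] at h1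
  linarith

theorem negcurv_cubic_upper_bound {n : ℕ}
    (f : EuclideanSpace ℝ (Fin n) → ℝ) (hf : ContDiff ℝ 2 f)
    (L_H δ_H δ_g : ℝ) (hL : 0 < L_H)
    (hlip : ∀ u v : EuclideanSpace ℝ (Fin n),
      ‖fderiv ℝ (fderiv ℝ f) u - fderiv ℝ (fderiv ℝ f) v‖ ≤ L_H * ‖u - v‖)
    (x d g : EuclideanSpace ℝ (Fin n))
    (A : EuclideanSpace ℝ (Fin n) →L[ℝ] EuclideanSpace ℝ (Fin n))
    (hsymm : ∀ u v : EuclideanSpace ℝ (Fin n), ⟪A u, v⟫ = ⟪u, A v⟫)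
    (hA : ∀ u : EuclideanSpace ℝ (Fin n),
      ‖fderiv ℝ (fderiv ℝ f) x u - innerSL ℝ (A u)‖ ≤ δ_H * ‖u‖)
    (hcurv : ⟪d, A d⟫ ≤ -‖d‖ ^ 3)
    (hgrad : ‖gradient f x - g‖ ≤ δ_g)
    (hdg : ⟪d, g⟫ ≤ 0) :
    ∀ α ∈ Set.Icc (0:ℝ) 1,
      f (x + α • d) - f x ≤
        α * δ_g * ‖d‖ - (α ^ 2 / 2) * ‖d‖ ^ 3 + (α ^ 2 / 2) * δ_H * ‖d‖ ^ 2 +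
          L_H / 6 * α ^ 3 * ‖d‖ ^ 3 := by
  intro α hα
  obtain ⟨hα0, hα1⟩ := hα
  have hdf : Differentiable ℝ f := hf.differentiable (by norm_num)
  have htay := taylor2_upper f hf L_H hL.le hlip x (α • d)
  -- first order term
  have hgr : fderiv ℝ f x = InnerProductSpace.toDual ℝ _ (gradient f x) :=
    ((hdf x).hasGradientAt.hasFDerivAt).fderiv
  have h1 : fderiv ℝ f x (α • d) = α * ⟪gradient f x, d⟫ := by
    rw [hgr]; simp [real_inner_smul_right]
  have h1b : ⟪gradient f x, d⟫ ≤ δ_g * ‖d‖ := by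
    have : ⟪gradient f x, d⟫ = ⟪g, d⟫ + ⟪gradient f x - g, d⟫ := by
      rw [inner_sub_left]; ring
    rw [this]
    have h2 : ⟪gradient f x - g, d⟫ ≤ δ_g * ‖d‖ :=
      (real_inner_le_norm _ _).trans (by gcongr)
    have h3 : ⟪g, d⟫ ≤ 0 := by rwa [real_inner_comm]
    linarith
  -- second order term
  have h2 : fderiv ℝ (fderiv ℝ f) x (α • d) (α • d)
      = α ^ 2 * (fderiv ℝ (fderiv ℝ f) x d d) := by
    simp [map_smul]; ring
  have h2b : fderiv ℝ (fderiv ℝ f) x d d ≤ -‖d‖ ^ 3 + δ_H * ‖d‖ ^ 2 := by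
    have hsplit : fderiv ℝ (fderiv ℝ f) x d d
        = (fderiv ℝ (fderiv ℝ f) x d - innerSL ℝ (A d)) d + ⟪A d, d⟫ := by
      simp [innerSL_apply_apply]
    rw [hsplit]
    have hb : (fderiv ℝ (fderiv ℝ f) x d - innerSL ℝ (A d)) d ≤ δ_H * ‖d‖ * ‖d‖ := by
      calc (fderiv ℝ (fderiv ℝ f) x d - innerSL ℝ (A d)) d
          ≤ ‖(fderiv ℝ (fderiv ℝ f) x d - innerSL ℝ (A d)) d‖ := le_abs_self _
        _ ≤ ‖fderiv ℝ (fderiv ℝ f) x d - innerSL ℝ (A d)‖ * ‖d‖ :=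
            ContinuousLinearMap.le_opNorm _ _
        _ ≤ δ_H * ‖d‖ * ‖d‖ := by gcongr; exact hA d
    have hc : ⟪A d, d⟫ ≤ -‖d‖ ^ 3 := by rwa [real_inner_comm]
    nlinarith [sq_nonneg ‖d‖]
  have h3 : ‖α • d‖ ^ 3 = α ^ 3 * ‖d‖ ^ 3 := by
    rw [norm_smul]; simp [abs_of_nonneg hα0]; ring
  rw [h1, h2, h3] at htay
  have hαsq : 0 ≤ α ^ 2 / 2 := by positivity
  nlinarith [mul_le_mul_of_nonneg_left h2b hαsq, mul_le_mul_of_nonneg_left h1b hα0]
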